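/- If D is a countably incomplete ultrafilter on I, then every topological ultraproduct ∏_D X_i via D is a P-space: countable intersections of open sets are open. -/

import Mathlib

open Filter Topology Set

universe u v

def USetoid {I : Type u} (D : Ultrafilter I) (X : I → Type v) : Setoid (∀ i, X i) where
  r x y := ∀ᶠ i in (D : Filter I), x i = y i
  iseqv := ⟨fun _ => Filter.Eventually.of_forall fun _ => rfl,
    fun h => h.mono fun _ e => e.symm,
    fun h₁ h₂ => (h₁.and h₂).mono fun _ e => e.1.trans e.2⟩

def Uprod {I : Type u} (D : Ultrafilter I) (X : I → Type v) := Quotient (USetoid D X)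

def ultrabox {I : Type u} (D : Ultrafilter I) (X : I → Type v) (U : ∀ i, Set (X i)) :
    Set (Uprod D X) :=
  {q | ∃ x : ∀ i, X i, Quotient.mk (USetoid D X) x = q ∧ {i | x i ∈ U i} ∈ D}

def uTop {I : Type u} (D : Ultrafilter I) (X : I → Type v) [∀ i, TopologicalSpace (X i)] :
    TopologicalSpace (Uprod D X) :=
  TopologicalSpace.generateFrom
    {s | ∃ U : ∀ i, Set (X i), (∀ i, IsOpen (U i)) ∧ s = ultrabox D X U}

lemma mem_ultrabox_iff {I : Type u} (D : Ultrafilter I) (X : I → Type v)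
    (U : ∀ i, Set (X i)) (x : ∀ i, X i) :
    @Membership.mem (Uprod D X) (Set (Uprod D X)) _ (ultrabox D X U) (Quotient.mk (USetoid D X) x) ↔ {i | x i ∈ U i} ∈ D := by
  constructor
  · rintro ⟨y, hy, hyU⟩
    have h : ∀ᶠ i in (D : Filter I), y i = x i := Quotient.exact hy
    filter_upwards [h, hyU] with i hi hi2
    simpa [← hi] using hi2
  · intro h; exact ⟨x, rfl, h⟩

lemma uTop_isBasis {I : Type u} (D : Ultrafilter I) (X : I → Type v)
    [∀ i, TopologicalSpace (X i)] :
    @TopologicalSpace.IsTopologicalBasis _ (uTop D X)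
      {s | ∃ U : ∀ i, Set (X i), (∀ i, IsOpen (U i)) ∧ s = ultrabox D X U} := by
  letI := uTop D X
  refine ⟨?_, ?_, rfl⟩
  · rintro t₁ ⟨Uu, hUu, rfl⟩ t₂ ⟨Vv, hVv, rfl⟩ q ⟨hq1, hq2⟩
    refine ⟨ultrabox D X (fun i => Uu i ∩ Vv i),
      ⟨_, fun i => (hUu i).inter (hVv i), rfl⟩, ?_, ?_⟩
    · obtain ⟨x, rfl⟩ := Quotient.exists_rep q
      rw [mem_ultrabox_iff] at hq1 hq2 ⊢
      filter_upwards [hq1, hq2] with i h1 h2 using ⟨h1, h2⟩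
    · rintro r hr
      obtain ⟨x, rfl⟩ := Quotient.exists_rep r
      rw [mem_ultrabox_iff] at hr
      constructor <;> rw [mem_ultrabox_iff] <;>
        [exact Filter.mem_of_superset hr fun i hi => hi.1;
         exact Filter.mem_of_superset hr fun i hi => hi.2]
  · apply Set.eq_univ_of_univ_subset
    rintro q -
    refine Set.mem_sUnion.mpr ⟨ultrabox D X (fun _ => Set.univ),
      ⟨_, fun _ => isOpen_univ, rfl⟩, ?_⟩
    obtain ⟨x, rfl⟩ := Quotient.exists_rep q
    rw [mem_ultrabox_iff]
    exact Filter.univ_mem' fun i => Set.mem_univ _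

/-- If `D` is a countably incomplete ultrafilter, then every topological
ultraproduct via `D` is a P-space: countable intersections of open sets are
open. -/
theorem countably_incomplete_ultraproduct_pspace {I : Type u} (D : Ultrafilter I)
    (hD : ∃ f : ℕ → Set I, (∀ n, f n ∈ D) ∧ ⋂ n, f n = ∅)
    (X : I → Type u) [∀ i, TopologicalSpace (X i)]
    (U : ℕ → Set (Uprod D X)) (hU : ∀ n, IsOpen[uTop D X] (U n)) :
    IsOpen[uTop D X] (⋂ n, U n) := by
  obtain ⟨f, hf, hfe⟩ := hD
  letI := uTop D X
  have hbasis := uTop_isBasis D X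
  rw [hbasis.isOpen_iff]
  intro q hq
  have hchoice : ∀ n, ∃ V : ∀ i, Set (X i), (∀ i, IsOpen (V i)) ∧
      q ∈ ultrabox D X V ∧ ultrabox D X V ⊆ U n := by
    intro n
    obtain ⟨t, ⟨V, hV, rfl⟩, hqt, hts⟩ :=
      hbasis.isOpen_iff.mp (hU n) q (Set.mem_iInter.mp hq n)
    exact ⟨V, hV, hqt, hts⟩
  choose V hVopen hqV hVsub using hchoice
  obtain ⟨x, rfl⟩ := Quotient.exists_rep q
  have hA : ∀ n, {i | x i ∈ V n i} ∈ D := fun n => (mem_ultrabox_iff D X _ x).mp (hqV n)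
  set h : ℕ → Set I := fun n => (⋂ k ∈ Set.Iic n, f k) ∩ (⋂ k ∈ Set.Iic n, {i | x i ∈ V k i})
    with hh
  have hhD : ∀ n, h n ∈ D := by
    intro n
    exact Filter.inter_mem
      ((Filter.biInter_mem (Set.finite_Iic n)).mpr fun k _ => hf k)
      ((Filter.biInter_mem (Set.finite_Iic n)).mpr fun k _ => hA k)
  have hanti : ∀ m n, m ≤ n → h n ⊆ h m := by
    intro m n hmn i hi
    exact ⟨Set.mem_iInter₂.mpr fun k hk =>
        Set.mem_iInter₂.mp hi.1 k (Set.mem_Iic.mpr (le_trans (Set.mem_Iic.mp hk) hmn)),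
      Set.mem_iInter₂.mpr fun k hk =>
        Set.mem_iInter₂.mp hi.2 k (Set.mem_Iic.mpr (le_trans (Set.mem_Iic.mp hk) hmn))⟩
  have hempty : ∀ i, ∃ n, i ∉ h n := by
    intro i
    by_contra hc
    push_neg at hc
    have : i ∈ ⋂ n, f n := Set.mem_iInter.mpr fun n =>
      Set.mem_iInter₂.mp (hc n).1 n (Set.mem_Iic.mpr le_rfl)
    simp [hfe] at this
  have hNfin : ∀ i, (Set.Finite {n | i ∈ h n}) := by
    intro i
    obtain ⟨m, hm⟩ := hempty i
    apply Set.Finite.subset (Set.finite_Iio m)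
    intro n hn
    by_contra hnm
    exact hm (hanti m n (not_lt.mp hnm) hn)
  set W : ∀ i, Set (X i) := fun i => ⋂ n ∈ {n | i ∈ h n}, V n i with hW
  have hWopen : ∀ i, IsOpen (W i) :=
    fun i => (hNfin i).isOpen_biInter fun n _ => hVopen n i
  refine ⟨ultrabox D X W, ⟨W, hWopen, rfl⟩, ?_, ?_⟩
  · rw [mem_ultrabox_iff]
    have : ∀ i, x i ∈ W i := by
      intro i
      apply Set.mem_iInter₂.mpr
      intro n hn
      exact Set.mem_iInter₂.mp hn.2 n (Set.mem_Iic.mpr le_rfl)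
    exact Filter.univ_mem' this
  · rintro r hr
    obtain ⟨y, rfl⟩ := Quotient.exists_rep r
    rw [mem_ultrabox_iff] at hr
    apply Set.mem_iInter.mpr
    intro n
    apply hVsub n
    rw [mem_ultrabox_iff]
    filter_upwards [hr, hhD n] with i hiW hihn
    exact Set.mem_iInter₂.mp hiW n hihn
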